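/- Let n ≥ 2, let H = ∏_{i=1}^n [a_i, b_i] ⊆ ℝ^n be a rectangle with a_i < b_i for all i, let F be a facet of H with respect to variable i (so the i-th coordinate is fixed to a_i or b_i), and let X ⊆ F. Then lim_{κ → ∞} λ^κ_{n−1}(X) = λ*_{n−1}(X), i.e. the (n−1)-dimensional rectangular κ-grid measures of X on the facet grid converge to the (n−1)-dimensional Lebesgue outer measure of the projection of X omitting coordinate i. -/

import Mathlib

open MeasureTheory Set Filter

/-- The projection `π̂_i` of `ℝ^n` omitting the `i`-th coordinate. -/
def projOmit (n : ℕ) (i : Fin n) (x : Fin n → ℝ) : {j : Fin n // j ≠ i} → ℝ :=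
  fun j => x j.1

/-- The κ-tile of the facet `{x ∈ ∏ j, [a j, b j] | x i = c}` indexed by the
multi-index `k` on the coordinates other than `i`. -/
noncomputable def facetTile (n : ℕ) (a b : Fin n → ℝ) (i : Fin n) (c : ℝ) (κ : ℕ)
    (k : {j : Fin n // j ≠ i} → ℕ) : Set (Fin n → ℝ) :=
  {x | x i = c ∧ ∀ j : {j : Fin n // j ≠ i},
    x j.1 ∈ Set.Icc (a j.1 + (k j : ℝ) / κ * (b j.1 - a j.1))
      (a j.1 + ((k j : ℝ) + 1) / κ * (b j.1 - a j.1))}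

/-- The common `(n-1)`-dimensional volume of a κ-tile of a facet w.r.t. variable `i`. -/
noncomputable def facetTileVol (n : ℕ) (a b : Fin n → ℝ) (i : Fin n) (κ : ℕ) : ℝ :=
  ∏ j : {j : Fin n // j ≠ i}, (b j.1 - a j.1) / κ

/-- The facet tile indexed by `k` belongs to `Tiles^κ_{n-1}(X)`: the `(n-1)`-dimensional
Lebesgue outer measure (of the projection omitting `i`) of the intersection of the tile
with `X` is at least half the `(n-1)`-dimensional volume of the tile. -/
def isApproxFacetTile (n : ℕ) (a b : Fin n → ℝ) (i : Fin n) (c : ℝ) (κ : ℕ)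
    (X : Set (Fin n → ℝ)) (k : {j : Fin n // j ≠ i} → Fin κ) : Prop :=
  ENNReal.ofReal (facetTileVol n a b i κ) / 2 ≤
    volume (projOmit n i '' (facetTile n a b i c κ (fun j => (k j : ℕ)) ∩ X))

open Classical in
/-- The `(n-1)`-dimensional rectangular κ-grid measure `λ^κ_{n-1}(X)` of a subset `X` of
the facet with `i`-th coordinate fixed to `c`. -/
noncomputable def facetGridMeasure (n : ℕ) (a b : Fin n → ℝ) (i : Fin n) (c : ℝ) (κ : ℕ)
    (X : Set (Fin n → ℝ)) : ℝ :=
  ∑ k : {j : Fin n // j ≠ i} → Fin κ,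
    if isApproxFacetTile n a b i c κ X k then facetTileVol n a b i κ else 0


section GridAux
open Metric

/-- Grid cell in `ι → ℝ`. -/
def gridCell {ι : Type*} (A B : ι → ℝ) (κ : ℕ) (k : ι → ℕ) : Set (ι → ℝ) :=
  Set.pi Set.univ fun j => Set.Icc (A j + (k j : ℝ) / κ * (B j - A j))
    (A j + ((k j : ℝ) + 1) / κ * (B j - A j))

variable {ι : Type*} [Fintype ι] {A B : ι → ℝ}

lemma gridCell_mem {κ : ℕ} {k : ι → ℕ} {x : ι → ℝ} :
    x ∈ gridCell A B κ k ↔ ∀ j, x j ∈ Set.Icc (A j + (k j : ℝ) / κ * (B j - A j))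
      (A j + ((k j : ℝ) + 1) / κ * (B j - A j)) := by
  simp only [gridCell, Set.mem_univ_pi]

omit [Fintype ι] in
lemma gridCell_isClosed (κ : ℕ) (k : ι → ℕ) : IsClosed (gridCell A B κ k) :=
  isClosed_set_pi fun _ _ => isClosed_Icc

lemma gridCell_measurable (κ : ℕ) (k : ι → ℕ) : MeasurableSet (gridCell A B κ k) :=
  MeasurableSet.univ_pi fun _ => measurableSet_Icc

lemma gridCell_volume (hAB : ∀ j, A j < B j) {κ : ℕ} (hκ : 1 ≤ κ) (k : ι → ℕ) :
    volume (gridCell A B κ k) = ENNReal.ofReal (∏ j, (B j - A j) / κ) := by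
  have hκ' : (κ : ℝ) ≠ 0 := Nat.cast_ne_zero.2 (by omega)
  have hκpos : (0:ℝ) < κ := by positivity
  rw [gridCell, volume_pi_pi, ENNReal.ofReal_prod_of_nonneg]
  · refine Finset.prod_congr rfl fun j _ => ?_
    rw [Real.volume_Icc]
    congr 1
    field_simp
    ring
  · intro j _
    have := hAB j
    exact div_nonneg (by linarith) hκpos.le

lemma gridCell_subset (hAB : ∀ j, A j < B j) {κ : ℕ} {k : ι → ℕ} (hk : ∀ j, k j < κ) :
    gridCell A B κ k ⊆ Set.pi Set.univ fun j => Set.Icc (A j) (B j) := by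
  intro x hx j _
  have hκpos : (0:ℝ) < κ := by
    have := hk j; exact_mod_cast Nat.pos_of_ne_zero (by omega)
  have h := gridCell_mem.1 hx j
  have hBA : (0:ℝ) < B j - A j := sub_pos.2 (hAB j)
  have hlo : (0:ℝ) ≤ (k j : ℝ) / κ * (B j - A j) := by positivity
  have hhi : ((k j : ℝ) + 1) / κ * (B j - A j) ≤ B j - A j := by
    have h1 : ((k j : ℝ) + 1) / κ ≤ 1 := by
      rw [div_le_one hκpos]
      exact_mod_cast hk j
    nlinarith
  exact ⟨by linarith [h.1], by linarith [h.2]⟩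

lemma gridCell_subset_closedBall (hAB : ∀ j, A j < B j) {κ : ℕ} (hκ : 1 ≤ κ) (k : ι → ℕ)
    {x : ι → ℝ} (hx : x ∈ gridCell A B κ k) :
    gridCell A B κ k ⊆ closedBall x ((∑ j, (B j - A j)) / κ) := by
  have hκpos : (0:ℝ) < κ := by exact_mod_cast hκ
  have hRpos : (0:ℝ) ≤ (∑ j, (B j - A j)) / κ := by
    apply div_nonneg _ (le_of_lt hκpos)
    exact Finset.sum_nonneg fun j _ => le_of_lt (sub_pos.2 (hAB j))
  intro y hy
  rw [mem_closedBall, dist_pi_le_iff hRpos]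
  intro j
  have h1 := gridCell_mem.1 hx j
  have h2 := gridCell_mem.1 hy j
  have hd : dist (y j) (x j) ≤ (A j + ((k j : ℝ) + 1) / κ * (B j - A j))
      - (A j + ((k j : ℝ)) / κ * (B j - A j)) := Real.dist_le_of_mem_Icc h2 h1
  have hsum : B j - A j ≤ ∑ j', (B j' - A j') :=
    Finset.single_le_sum (f := fun j' => B j' - A j')
      (fun j' _ => le_of_lt (sub_pos.2 (hAB j'))) (Finset.mem_univ j)
  have heq : (A j + ((k j : ℝ) + 1) / κ * (B j - A j)) - (A j + ((k j : ℝ)) / κ * (B j - A j))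
      = (B j - A j) / κ := by field_simp; ring
  rw [heq] at hd
  exact hd.trans (div_le_div_of_nonneg_right hsum hκpos.le |>.trans le_rfl)

lemma gridCell_inter_null_aux (hAB : ∀ j, A j < B j) {κ : ℕ} (hκ : 1 ≤ κ) {k k' : ι → ℕ}
    {j : ι} (h : k j < k' j) :
    volume (gridCell A B κ k ∩ gridCell A B κ k') = 0 := by
  have hκpos : (0:ℝ) < κ := by exact_mod_cast hκ
  rw [gridCell, gridCell, ← Set.pi_inter_distrib, volume_pi_pi]
  apply Finset.prod_eq_zero (Finset.mem_univ j)
  rw [Set.Icc_inter_Icc]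
  refine measure_mono_null (Set.Icc_subset_Icc le_sup_right inf_le_left) ?_
  rw [Real.volume_Icc, ENNReal.ofReal_eq_zero]
  have h1 : ((k j : ℝ) + 1) ≤ (k' j : ℝ) := by exact_mod_cast h
  have hBA : (0:ℝ) < B j - A j := sub_pos.2 (hAB j)
  have : ((k j : ℝ) + 1) / κ * (B j - A j) ≤ (k' j : ℝ) / κ * (B j - A j) := by
    apply mul_le_mul_of_nonneg_right _ hBA.le
    exact div_le_div_of_nonneg_right h1 hκpos.le
  linarith

lemma gridCell_inter_null (hAB : ∀ j, A j < B j) {κ : ℕ} (hκ : 1 ≤ κ) {k k' : ι → ℕ}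
    (h : k ≠ k') : volume (gridCell A B κ k ∩ gridCell A B κ k') = 0 := by
  obtain ⟨j, hj⟩ := Function.ne_iff.1 h
  rcases lt_or_gt_of_ne hj with h' | h'
  · exact gridCell_inter_null_aux hAB hκ h'
  · rw [Set.inter_comm]; exact gridCell_inter_null_aux hAB hκ h'

/-- The index of the grid cell containing `x`. -/
noncomputable def gridIdx (A B : ι → ℝ) (κ : ℕ) (x : ι → ℝ) (j : ι) : ℕ :=
  ⌊(κ : ℝ) * ((x j - A j) / (B j - A j))⌋₊

section pointwise
variable {x : ι → ℝ} {κ : ℕ}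

lemma mem_gridCell_iff (hAB : ∀ j, A j < B j) (hκ : 1 ≤ κ) {k : ι → ℕ} :
    x ∈ gridCell A B κ k ↔
      ∀ j, (k j : ℝ) ≤ κ * ((x j - A j) / (B j - A j)) ∧
        κ * ((x j - A j) / (B j - A j)) ≤ (k j : ℝ) + 1 := by
  have hκpos : (0:ℝ) < κ := by exact_mod_cast hκ
  rw [gridCell_mem]
  refine forall_congr' fun j => ?_
  have hBA : (0:ℝ) < B j - A j := sub_pos.2 (hAB j)
  have e : (κ:ℝ) * ((x j - A j) / (B j - A j)) = (x j - A j) * κ / (B j - A j) := by ring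
  have key1 : ∀ r : ℝ, (A j + r / κ * (B j - A j) ≤ x j) ↔ r * (B j - A j) ≤ (x j - A j) * κ := by
    intro r
    rw [div_mul_eq_mul_div, ← le_sub_iff_add_le', div_le_iff₀ hκpos]
  have key2 : ∀ r : ℝ, (x j ≤ A j + r / κ * (B j - A j)) ↔ (x j - A j) * κ ≤ r * (B j - A j) := by
    intro r
    rw [div_mul_eq_mul_div, ← sub_le_iff_le_add', le_div_iff₀ hκpos]
  rw [Set.mem_Icc, key1, key2, e, le_div_iff₀ hBA, div_le_iff₀ hBA]

variable (hAB : ∀ j, A j < B j) (hκ : 1 ≤ κ)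
  (hxin : ∀ j, x j ∈ Set.Ioo (A j) (B j))
  (hirr : ∀ (j : ι) (q : ℚ), x j ≠ A j + (q : ℝ) * (B j - A j))

include hAB hxin

lemma gridRatio_mem (j : ι) : (x j - A j) / (B j - A j) ∈ Set.Ioo (0:ℝ) 1 := by
  have hBA : (0:ℝ) < B j - A j := sub_pos.2 (hAB j)
  constructor
  · exact div_pos (sub_pos.2 (hxin j).1) hBA
  · rw [div_lt_one hBA]; linarith [(hxin j).2]

include hκ in
lemma gridIdx_lt (j : ι) : gridIdx A B κ x j < κ := by
  have hκpos : (0:ℝ) < κ := by exact_mod_cast hκ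
  have h := gridRatio_mem hAB hxin j
  rw [gridIdx, Nat.floor_lt (by nlinarith [h.1])]
  nlinarith [h.1, h.2]

include hκ in
lemma mem_gridCell_gridIdx : x ∈ gridCell A B κ (gridIdx A B κ x) := by
  rw [mem_gridCell_iff hAB hκ]
  intro j
  have h := gridRatio_mem hAB hxin j
  have hnn : (0:ℝ) ≤ κ * ((x j - A j) / (B j - A j)) := by nlinarith [h.1]
  exact ⟨Nat.floor_le hnn, (Nat.lt_floor_add_one _).le⟩

omit hxin in
include hκ hirr in
lemma eq_gridIdx_of_mem {k : ι → ℕ} (hmem : x ∈ gridCell A B κ k) : k = gridIdx A B κ x := by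
  have hκpos : (0:ℝ) < κ := by exact_mod_cast hκ
  funext j
  have h := (mem_gridCell_iff hAB hκ).1 hmem j
  set t := (x j - A j) / (B j - A j) with ht
  have hBA : (0:ℝ) < B j - A j := sub_pos.2 (hAB j)
  have hxj : x j = A j + t * (B j - A j) := by rw [ht]; field_simp; ring
  have hq : ∀ m : ℕ, (κ:ℝ) * t ≠ m := by
    intro m hm
    apply hirr j ((m : ℚ) / (κ : ℚ))
    have : t = (m:ℝ) / κ := by field_simp; linear_combination hm
    rw [hxj, this]
    push_cast
    ring_nf
  have h1 : (k j : ℝ) < κ * t := lt_of_le_of_ne h.1 (fun hc => hq (k j) hc.symm)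
  have h2 : (κ:ℝ) * t < (k j : ℝ) + 1 := lt_of_le_of_ne h.2 (fun hc => hq (k j + 1) (by push_cast; linarith [hc]))
  rw [gridIdx, ← ht]
  symm
  rw [Nat.floor_eq_iff (le_trans (Nat.cast_nonneg (k j)) h.1)]
  exact ⟨h1.le, by push_cast; linarith⟩

end pointwise

/-- The doubling constant used for the Vitali family. -/
noncomputable def gridConst (A B : ι → ℝ) : ℝ :=
  max ((3:ℝ) ^ (Fintype.card ι))
    ((6 * ∑ j, (B j - A j)) ^ (Fintype.card ι) / ∏ j, (B j - A j))

lemma gridConst_nonneg : 0 ≤ gridConst A B :=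
  le_trans (by positivity) (le_max_left _ _)

lemma grid_doubling (x : ι → ℝ) :
    ∃ᶠ r in nhdsWithin 0 (Set.Ioi 0), volume (closedBall x (3 * r)) ≤
      ((gridConst A B).toNNReal : ENNReal) * volume (closedBall x r) := by
  apply Filter.Eventually.frequently
  filter_upwards [self_mem_nhdsWithin] with r (hr : r ∈ Set.Ioi 0)
  have hr0 : (0:ℝ) ≤ r := le_of_lt hr
  have h3 : (0:ℝ) ≤ 3 * r := by linarith
  rw [Real.volume_pi_closedBall x h3, Real.volume_pi_closedBall x hr0]
  have hC : ((gridConst A B).toNNReal : ENNReal) = ENNReal.ofReal (gridConst A B) := rfl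
  rw [hC, ← ENNReal.ofReal_mul gridConst_nonneg]
  apply ENNReal.ofReal_le_ofReal
  have he : (2 * (3 * r)) ^ Fintype.card ι = (3:ℝ) ^ Fintype.card ι * (2 * r) ^ Fintype.card ι := by
    rw [← mul_pow]; ring_nf
  rw [he]
  have : (0:ℝ) ≤ (2*r) ^ Fintype.card ι := by positivity
  exact mul_le_mul_of_nonneg_right (le_max_left _ _) this

lemma prod_div_pow (hAB : ∀ j, A j < B j) (κ : ℕ) :
    (∏ j, (B j - A j) / (κ:ℝ)) = (∏ j, (B j - A j)) / (κ:ℝ) ^ (Fintype.card ι) := by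
  rw [Finset.prod_div_distrib, Finset.prod_const, Finset.card_univ]

lemma gridCell_vitali_bound (hAB : ∀ j, A j < B j) {κ : ℕ} (hκ : 1 ≤ κ) (k : ι → ℕ)
    (x : ι → ℝ) :
    volume (closedBall x (3 * ((∑ j, (B j - A j)) / κ))) ≤
      ((gridConst A B).toNNReal : ENNReal) * volume (gridCell A B κ k) := by
  have hκpos : (0:ℝ) < κ := by exact_mod_cast hκ
  have hP : (0:ℝ) < ∏ j, (B j - A j) :=
    Finset.prod_pos fun j _ => sub_pos.2 (hAB j)
  have hR : (0:ℝ) ≤ ∑ j, (B j - A j) :=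
    Finset.sum_nonneg fun j _ => le_of_lt (sub_pos.2 (hAB j))
  have hr : (0:ℝ) ≤ 3 * ((∑ j, (B j - A j)) / κ) := by positivity
  rw [Real.volume_pi_closedBall x hr, gridCell_volume hAB hκ k]
  have hC : ((gridConst A B).toNNReal : ENNReal) = ENNReal.ofReal (gridConst A B) := rfl
  rw [hC, ← ENNReal.ofReal_mul gridConst_nonneg]
  apply ENNReal.ofReal_le_ofReal
  rw [prod_div_pow hAB κ]
  set d := Fintype.card ι
  set R := ∑ j, (B j - A j) with hRdef
  set P := ∏ j, (B j - A j) with hPdef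
  have he : (2 * (3 * (R / κ))) ^ d = (6 * R) ^ d / (κ:ℝ) ^ d := by
    rw [← div_pow]; ring_nf
  rw [he]
  have hstep : (6 * R) ^ d / (κ:ℝ) ^ d = (6 * R) ^ d / P * (P / (κ:ℝ) ^ d) := by
    field_simp
  rw [hstep]
  apply mul_le_mul_of_nonneg_right (le_max_right _ _)
  positivity

lemma gridCell_interior_nonempty (hAB : ∀ j, A j < B j) {κ : ℕ} (hκ : 1 ≤ κ) (k : ι → ℕ) :
    (interior (gridCell A B κ k)).Nonempty := by
  have hκpos : (0:ℝ) < κ := by exact_mod_cast hκ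
  rw [gridCell, interior_pi_set Set.finite_univ]
  simp only [interior_Icc]
  rw [Set.univ_pi_nonempty_iff]
  intro j
  rw [Set.nonempty_Ioo]
  have hBA : (0:ℝ) < B j - A j := sub_pos.2 (hAB j)
  have : (0:ℝ) < 1 / κ * (B j - A j) := by positivity
  have he : ((k j : ℝ) + 1) / κ * (B j - A j) - (k j : ℝ) / κ * (B j - A j)
      = 1 / κ * (B j - A j) := by field_simp; ring
  linarith

/-- Selection predicate: the cell indexed by `k` covers at least half of `Y`. -/
def gridSel (A B : ι → ℝ) (Y : Set (ι → ℝ)) (κ : ℕ) (k : ι → Fin κ) : Prop :=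
  ENNReal.ofReal (∏ j, (B j - A j) / κ) / 2 ≤
    volume (gridCell A B κ (fun j => (k j : ℕ)) ∩ Y)

open Classical in
/-- Union of the selected cells. -/
noncomputable def gridUnion (A B : ι → ℝ) (Y : Set (ι → ℝ)) (κ : ℕ) : Set (ι → ℝ) :=
  ⋃ k ∈ Finset.univ.filter (gridSel A B Y κ), gridCell A B κ (fun j => (k j : ℕ))

lemma gridUnion_measurable (Y : Set (ι → ℝ)) (κ : ℕ) :
    MeasurableSet (gridUnion A B Y κ) :=
  Finset.measurableSet_biUnion _ fun k _ => gridCell_measurable κ _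

lemma gridUnion_subset (hAB : ∀ j, A j < B j) (Y : Set (ι → ℝ)) (κ : ℕ) :
    gridUnion A B Y κ ⊆ Set.pi Set.univ fun j => Set.Icc (A j) (B j) := by
  refine Set.iUnion₂_subset fun k _ => ?_
  exact gridCell_subset hAB fun j => (k j).isLt

open Classical in
lemma volume_gridUnion (hAB : ∀ j, A j < B j) (Y : Set (ι → ℝ)) {κ : ℕ} (hκ : 1 ≤ κ) :
    volume (gridUnion A B Y κ) = ∑ k : ι → Fin κ,
      if gridSel A B Y κ k then ENNReal.ofReal (∏ j, (B j - A j) / κ) else 0 := by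
  rw [gridUnion, measure_biUnion_finset₀]
  · rw [Finset.sum_filter]
    refine Finset.sum_congr rfl fun k _ => ?_
    split
    · exact gridCell_volume hAB hκ _
    · rfl
  · intro k _ k' _ hkk'
    have h : (fun j => ((k j : ℕ))) ≠ (fun j => ((k' j : ℕ))) := by
      intro hc
      apply hkk'
      funext j
      exact Fin.val_injective (congrFun hc j)
    exact gridCell_inter_null hAB hκ h
  · exact fun k _ => (gridCell_measurable κ _).nullMeasurableSet

open Classical in
lemma toReal_volume_gridUnion (hAB : ∀ j, A j < B j) (Y : Set (ι → ℝ)) {κ : ℕ} (hκ : 1 ≤ κ) :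
    (volume (gridUnion A B Y κ)).toReal = ∑ k : ι → Fin κ,
      if gridSel A B Y κ k then ∏ j, (B j - A j) / (κ:ℝ) else 0 := by
  have hnn : (0:ℝ) ≤ ∏ j, (B j - A j) / (κ:ℝ) := by
    have hκpos : (0:ℝ) < κ := by exact_mod_cast hκ
    exact Finset.prod_nonneg fun j _ => div_nonneg (le_of_lt (sub_pos.2 (hAB j))) hκpos.le
  rw [volume_gridUnion hAB Y hκ, ENNReal.toReal_sum]
  · refine Finset.sum_congr rfl fun k _ => ?_
    split
    · exact ENNReal.toReal_ofReal hnn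
    · simp
  · intro k _
    split
    · exact ENNReal.ofReal_ne_top
    · simp

lemma half_le_of_ratio (μT μZT : ENNReal) (h0 : μT ≠ 0) (ht : μT ≠ ⊤)
    (h : 1/2 ≤ μZT / μT) : μT / 2 ≤ μZT := by
  have h2 := (ENNReal.le_div_iff_mul_le (Or.inl h0) (Or.inl ht)).1 h
  have he : μT / 2 = 1/2 * μT := by rw [ENNReal.div_eq_inv_mul, one_div]
  rw [he]; exact h2

lemma ratio_ge_of_half (μT μZT : ENNReal) (h0 : μT ≠ 0) (ht : μT ≠ ⊤)
    (h : μT / 2 ≤ μZT) : 1/2 ≤ μZT / μT := by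
  rw [ENNReal.le_div_iff_mul_le (Or.inl h0) (Or.inl ht)]
  have he : μT / 2 = 1/2 * μT := by rw [ENNReal.div_eq_inv_mul, one_div]
  rw [← he]; exact h

lemma indicator_tendsto_of [Nonempty ι] (hAB : ∀ j, A j < B j) (Y Z : Set (ι → ℝ))
    (hZQ : Z ⊆ Set.pi Set.univ fun j => Set.Icc (A j) (B j))
    (hZval : ∀ t : Set (ι → ℝ), MeasurableSet t → volume (Z ∩ t) = volume (Y ∩ t))
    {v : VitaliFamily (volume : Measure (ι → ℝ))}
    (hsets : ∀ κ : ℕ, 1 ≤ κ → ∀ (k : ι → ℕ) (x : ι → ℝ),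
      x ∈ gridCell A B κ k → gridCell A B κ k ∈ v.setsAt x)
    {x : ι → ℝ}
    (hx1 : ∀ (j : ι) (q : ℚ), x j ≠ A j + (q : ℝ) * (B j - A j))
    (hx2 : Tendsto (fun s => volume (Z ∩ s) / volume s) (v.filterAt x)
      (nhds (Z.indicator 1 x))) :
    Tendsto (fun κ => (gridUnion A B Y κ).indicator (1 : (ι → ℝ) → ENNReal) x) atTop
      (nhds (Z.indicator 1 x)) := by
  classical
  by_cases hin : ∀ j, x j ∈ Set.Ioo (A j) (B j)
  · -- x is in the open box
    have hxmem : ∀ κ : ℕ, 1 ≤ κ → x ∈ gridCell A B κ (gridIdx A B κ x) :=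
      fun κ hκ => mem_gridCell_gridIdx hAB hκ hin
    have hvol : ∀ κ : ℕ, 1 ≤ κ →
        volume (gridCell A B κ (gridIdx A B κ x)) = ENNReal.ofReal (∏ j, (B j - A j) / κ) :=
      fun κ hκ => gridCell_volume hAB hκ _
    have hvpos : ∀ κ : ℕ, 1 ≤ κ → (0:ℝ) < ∏ j, (B j - A j) / κ := by
      intro κ hκ
      have hκpos : (0:ℝ) < κ := by exact_mod_cast hκ
      exact Finset.prod_pos fun j _ => div_pos (sub_pos.2 (hAB j)) hκpos
    -- the cells containing x tend to x in the Vitali filter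
    have htt : Tendsto (fun κ : ℕ => gridCell A B κ (gridIdx A B κ x)) atTop
        (v.filterAt x) := by
      rw [v.tendsto_filterAt_iff]
      constructor
      · filter_upwards [eventually_ge_atTop 1] with κ hκ
        exact hsets κ hκ _ x (hxmem κ hκ)
      · intro ε hε
        have hlim : Tendsto (fun κ : ℕ => (∑ j, (B j - A j)) / (κ:ℝ)) atTop (nhds 0) :=
          tendsto_const_div_atTop_nhds_zero_nat _
        filter_upwards [hlim.eventually_lt_const hε, eventually_ge_atTop 1] with κ h1 h2
        exact (gridCell_subset_closedBall hAB h2 _ (hxmem κ h2)).trans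
          (closedBall_subset_closedBall h1.le)
    have hratio := hx2.comp htt
    -- selection at the cell containing x, for κ ≥ 1
    by_cases hxZ : x ∈ Z
    · rw [Set.indicator_of_mem hxZ] at hratio ⊢
      have hhalf : ∀ᶠ κ : ℕ in atTop,
          1/2 < volume (Z ∩ gridCell A B κ (gridIdx A B κ x)) /
            volume (gridCell A B κ (gridIdx A B κ x)) := by
        exact hratio.eventually (lt_mem_nhds
          (by simpa using ENNReal.half_lt_self one_ne_zero ENNReal.one_ne_top))
      have hev : ∀ᶠ κ : ℕ in atTop, (gridUnion A B Y κ).indicator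
          (1 : (ι → ℝ) → ENNReal) x = 1 := by
        filter_upwards [hhalf, eventually_ge_atTop 1] with κ hh hκ
        rw [Set.indicator_of_mem]
        · rfl
        · -- x belongs to the selected cell
          have hne0 : volume (gridCell A B κ (gridIdx A B κ x)) ≠ 0 := by
            rw [hvol κ hκ]
            exact (ENNReal.ofReal_pos.2 (hvpos κ hκ)).ne'
          have hnetop : volume (gridCell A B κ (gridIdx A B κ x)) ≠ ⊤ := by
            rw [hvol κ hκ]; exact ENNReal.ofReal_ne_top
          have hsel : gridSel A B Y κ (fun j => ⟨gridIdx A B κ x j, gridIdx_lt hAB hκ hin j⟩) := by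
            have h1 : volume (gridCell A B κ (gridIdx A B κ x)) / 2 ≤
                volume (Z ∩ gridCell A B κ (gridIdx A B κ x)) :=
              half_le_of_ratio _ _ hne0 hnetop hh.le
            have h2 := hZval (gridCell A B κ (gridIdx A B κ x))
              (gridCell_measurable κ (gridIdx A B κ x))
            rw [gridSel]
            have he : (fun j => ((⟨gridIdx A B κ x j, gridIdx_lt hAB hκ hin j⟩ : Fin κ) : ℕ))
                = gridIdx A B κ x := rfl
            rw [he, ← hvol κ hκ, Set.inter_comm _ Y, ← h2]
            exact h1
          rw [gridUnion]
          apply Set.mem_biUnion (Finset.mem_coe.2 (Finset.mem_filter.2 ⟨Finset.mem_univ _, hsel⟩))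
          exact hxmem κ hκ
      exact tendsto_const_nhds.congr' (hev.mono fun κ h => h.symm)
    · rw [Set.indicator_of_notMem hxZ] at hratio ⊢
      have hlt : ∀ᶠ κ : ℕ in atTop,
          volume (Z ∩ gridCell A B κ (gridIdx A B κ x)) /
            volume (gridCell A B κ (gridIdx A B κ x)) < 1/2 := by
        exact hratio.eventually (Iio_mem_nhds (ENNReal.half_pos one_ne_zero))
      have hev : ∀ᶠ κ : ℕ in atTop, (gridUnion A B Y κ).indicator
          (1 : (ι → ℝ) → ENNReal) x = 0 := by
        filter_upwards [hlt, eventually_ge_atTop 1] with κ hh hκ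
        rw [Set.indicator_of_notMem]
        intro hxU
        rw [gridUnion] at hxU
        obtain ⟨k, hkmem, hxk⟩ := Set.mem_iUnion₂.1 hxU
        have hkf := Finset.mem_filter.1 hkmem
        have hkeq : (fun j => ((k j : ℕ))) = gridIdx A B κ x :=
          eq_gridIdx_of_mem hAB hκ hx1 hxk
        have hsel := hkf.2
        rw [gridSel, hkeq] at hsel
        have hne0 : volume (gridCell A B κ (gridIdx A B κ x)) ≠ 0 := by
          rw [hvol κ hκ]
          exact (ENNReal.ofReal_pos.2 (hvpos κ hκ)).ne'
        have hnetop : volume (gridCell A B κ (gridIdx A B κ x)) ≠ ⊤ := by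
          rw [hvol κ hκ]; exact ENNReal.ofReal_ne_top
        have h2 := hZval (gridCell A B κ (gridIdx A B κ x))
          (gridCell_measurable κ (gridIdx A B κ x))
        have h3 : volume (gridCell A B κ (gridIdx A B κ x)) / 2 ≤
            volume (Z ∩ gridCell A B κ (gridIdx A B κ x)) := by
          rw [hvol κ hκ, h2, Set.inter_comm]
          exact hsel
        exact absurd (ratio_ge_of_half _ _ hne0 hnetop h3) (not_le.2 hh)
      exact tendsto_const_nhds.congr' (hev.mono fun κ h => h.symm)
  · -- x is outside the open box, hence outside everything
    push_neg at hin
    obtain ⟨j, hj⟩ := hin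
    have hxQ : x ∉ Set.pi Set.univ fun j => Set.Icc (A j) (B j) := by
      intro hxQ
      have h := hxQ j (Set.mem_univ j)
      rcases eq_or_lt_of_le h.1 with h1 | h1
      · exact hx1 j 0 (by push_cast; linarith [h1])
      rcases eq_or_lt_of_le h.2 with h2 | h2
      · exact hx1 j 1 (by push_cast; linarith [h2])
      exact hj ⟨h1, h2⟩
    have hxZ : x ∉ Z := fun h => hxQ (hZQ h)
    have hxU : ∀ κ : ℕ, x ∉ gridUnion A B Y κ :=
      fun κ h => hxQ (gridUnion_subset hAB Y κ h)
    rw [Set.indicator_of_notMem hxZ]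
    have : ∀ κ : ℕ, (gridUnion A B Y κ).indicator (1 : (ι → ℝ) → ENNReal) x = 0 :=
      fun κ => Set.indicator_of_notMem (hxU κ) _
    simpa [this] using tendsto_const_nhds

open Classical in
theorem grid_core [Nonempty ι]
    (hAB : ∀ j, A j < B j) (Y : Set (ι → ℝ))
    (hY : Y ⊆ Set.pi Set.univ fun j => Set.Icc (A j) (B j))
    (f : ℕ → ℝ)
    (hf : ∀ κ : ℕ, 1 ≤ κ → f κ = ∑ k : ι → Fin κ,
      if gridSel A B Y κ k then ∏ j, (B j - A j) / (κ:ℝ) else 0) :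
    Tendsto f atTop (nhds (volume Y).toReal) := by
  set Q := Set.pi Set.univ fun j => Set.Icc (A j) (B j) with hQ
  have hQm : MeasurableSet Q := MeasurableSet.univ_pi fun _ => measurableSet_Icc
  have hQfin : volume Q ≠ ⊤ := by
    rw [hQ, volume_pi_pi]
    refine (ENNReal.prod_lt_top fun j _ => ?_).ne
    rw [Real.volume_Icc]
    exact ENNReal.ofReal_lt_top
  have hYfin : volume Y ≠ ⊤ := fun h => hQfin (top_le_iff.1 (h ▸ measure_mono hY))
  set Z := toMeasurable volume Y ∩ Q with hZ
  have hZm : MeasurableSet Z := (measurableSet_toMeasurable _ _).inter hQm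
  have hZQ : Z ⊆ Q := Set.inter_subset_right
  have hZval : ∀ t : Set (ι → ℝ), MeasurableSet t → volume (Z ∩ t) = volume (Y ∩ t) := by
    intro t ht
    have e1 : Z ∩ t = toMeasurable volume Y ∩ (Q ∩ t) := by rw [hZ, Set.inter_assoc]
    rw [e1, Measure.measure_toMeasurable_inter (hQm.inter ht) hYfin, ← Set.inter_assoc,
      Set.inter_eq_self_of_subset_left hY]
  have hZY : volume Z = volume Y := by
    have := hZval Set.univ MeasurableSet.univ
    simpa using this
  set v : VitaliFamily (volume : Measure (ι → ℝ)) :=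
    Vitali.vitaliFamily volume (gridConst A B).toNNReal (fun x => grid_doubling x) with hv
  have hsets : ∀ κ : ℕ, 1 ≤ κ → ∀ (k : ι → ℕ) (x : ι → ℝ),
      x ∈ gridCell A B κ k → gridCell A B κ k ∈ v.setsAt x := by
    intro κ hκ k x hx
    exact ⟨gridCell_isClosed κ k, gridCell_interior_nonempty hAB hκ k,
      (∑ j, (B j - A j)) / κ, gridCell_subset_closedBall hAB hκ k hx,
      gridCell_vitali_bound hAB hκ k x⟩
  have hdens := v.ae_tendsto_measure_inter_div_of_measurableSet hZm
  have hN : volume (⋃ j : ι, ⋃ q : ℚ,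
      {x : ι → ℝ | x j = A j + (q:ℝ) * (B j - A j)}) = 0 := by
    refine measure_iUnion_null fun j => measure_iUnion_null fun q => ?_
    set t := A j + (q:ℝ) * (B j - A j) with htdef
    have he : {x : ι → ℝ | x j = t} =
        Set.pi Set.univ (fun j' => if j' = j then ({t} : Set ℝ) else Set.univ) := by
      ext x
      simp only [Set.mem_setOf_eq, Set.mem_univ_pi]
      constructor
      · intro h j'
        by_cases hj : j' = j
        · subst hj; simp [h]
        · simp [hj]
      · intro h
        have := h j
        simpa using this
    rw [he, volume_pi_pi]
    apply Finset.prod_eq_zero (Finset.mem_univ j)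
    simp
  have hae : ∀ᵐ x : (ι → ℝ) ∂volume, Tendsto
      (fun κ => (gridUnion A B Y κ).indicator (1 : (ι → ℝ) → ENNReal) x) atTop
      (nhds (Z.indicator 1 x)) := by
    have h1 : ∀ᵐ x : (ι → ℝ) ∂volume, x ∉ ⋃ j : ι, ⋃ q : ℚ,
        {x : ι → ℝ | x j = A j + (q:ℝ) * (B j - A j)} :=
      measure_eq_zero_iff_ae_notMem.1 hN
    filter_upwards [h1, hdens] with x hx1 hx2
    refine indicator_tendsto_of hAB Y Z hZQ hZval hsets ?_ hx2
    intro j q hc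
    exact hx1 (Set.mem_iUnion.2 ⟨j, Set.mem_iUnion.2 ⟨q, hc⟩⟩)
  have hkey : Tendsto (fun κ => volume (gridUnion A B Y κ)) atTop (nhds (volume Z)) := by
    have hmain := tendsto_lintegral_of_dominated_convergence (μ := volume)
      (F := fun κ => (gridUnion A B Y κ).indicator (1 : (ι → ℝ) → ENNReal))
      (f := Z.indicator 1) (Q.indicator 1)
      (fun κ => measurable_one.indicator (gridUnion_measurable Y κ))
      (fun κ => Filter.Eventually.of_forall
        (Set.indicator_le_indicator_of_subset (gridUnion_subset hAB Y κ) (fun _ => zero_le)))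
      (by rw [lintegral_indicator_one hQm]; exact hQfin) hae
    have e2 : ∫⁻ x, Z.indicator 1 x ∂volume = volume Z := lintegral_indicator_one hZm
    rw [← e2]
    exact hmain.congr fun κ => lintegral_indicator_one (gridUnion_measurable Y κ)
  have hfin2 : volume Z ≠ ⊤ := by rw [hZY]; exact hYfin
  have hR : Tendsto (fun κ => (volume (gridUnion A B Y κ)).toReal) atTop
      (nhds (volume Z).toReal) := (ENNReal.tendsto_toReal hfin2).comp hkey
  rw [← hZY]
  refine hR.congr' ?_
  filter_upwards [eventually_ge_atTop 1] with κ hκ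
  rw [hf κ hκ, toReal_volume_gridUnion hAB Y hκ]

end GridAux

lemma projOmit_image_tile_inter {n : ℕ} (a b : Fin n → ℝ) (i : Fin n) (c : ℝ) (κ : ℕ)
    (k : {j : Fin n // j ≠ i} → ℕ) {X : Set (Fin n → ℝ)} (hXc : X ⊆ {x | x i = c}) :
    projOmit n i '' (facetTile n a b i c κ k ∩ X) =
      gridCell (fun j : {j : Fin n // j ≠ i} => a j.1) (fun j => b j.1) κ k ∩
        projOmit n i '' X := by
  have hP : Set.InjOn (projOmit n i) {x | x i = c} := by
    intro x hx y hy hxy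
    funext j
    by_cases hj : j = i
    · subst hj; rw [Set.mem_setOf_eq] at hx hy; rw [hx, hy]
    · exact congrFun hxy ⟨j, hj⟩
  have h1 : facetTile n a b i c κ k ⊆ {x | x i = c} := fun x hx => hx.1
  rw [Set.InjOn.image_inter hP h1 hXc]
  congr 1
  apply Set.Subset.antisymm
  · rintro _ ⟨x, hx, rfl⟩
    intro j _
    exact hx.2 j
  · intro y hy
    refine ⟨fun j => if h : j = i then c else y ⟨j, h⟩, ⟨dif_pos rfl, ?_⟩, ?_⟩
    · intro j
      have hmem := hy j (Set.mem_univ j)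
      show (if h : j.1 = i then c else y ⟨j.1, h⟩) ∈ Set.Icc _ _
      rw [dif_neg j.2]
      exact hmem
    · funext j
      show (if h : j.1 = i then c else y ⟨j.1, h⟩) = y j
      rw [dif_neg j.2]

/-- For any subset `X` of a facet `F` of the rectangle `H = ∏ j, [a j, b j]` w.r.t.
variable `i` (the `i`-th coordinate being fixed to `c = a i` or `c = b i`), the
`(n-1)`-dimensional rectangular κ-grid measures of `X` converge, as `κ → ∞`, to the
`(n-1)`-dimensional Lebesgue outer measure of the projection of `X` omitting
coordinate `i`. -/
theorem facetGridMeasure_tendsto_outerMeasure (n : ℕ) (hn : 2 ≤ n) (a b : Fin n → ℝ)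
    (hab : ∀ i, a i < b i) (i : Fin n) (c : ℝ) (hc : c = a i ∨ c = b i)
    (X : Set (Fin n → ℝ))
    (hX : X ⊆ {x | (∀ j, x j ∈ Set.Icc (a j) (b j)) ∧ x i = c}) :
    Tendsto (fun κ : ℕ => facetGridMeasure n a b i c κ X) atTop
      (nhds (volume (projOmit n i '' X)).toReal) := by
  classical
  have hne : Nonempty {j : Fin n // j ≠ i} := by
    obtain ⟨j, hj⟩ := Fintype.exists_ne_of_one_lt_card (by simp; omega) i
    exact ⟨⟨j, hj⟩⟩
  have hAB : ∀ j : {j : Fin n // j ≠ i}, (fun j : {j : Fin n // j ≠ i} => a j.1) j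
      < (fun j : {j : Fin n // j ≠ i} => b j.1) j := fun j => hab j.1
  have hXc : X ⊆ {x | x i = c} := fun x hx => (hX hx).2
  refine grid_core hAB (projOmit n i '' X) ?_ _ ?_
  · rintro _ ⟨x, hx, rfl⟩ j _
    exact (hX hx).1 j.1
  · intro κ hκ
    rw [facetGridMeasure]
    refine Finset.sum_congr (congrArg (@Finset.univ _) (Subsingleton.elim _ _)) fun k _ => ?_
    refine if_congr ?_ rfl rfl
    rw [isApproxFacetTile, gridSel,
      projOmit_image_tile_inter a b i c κ (fun j => (k j : ℕ)) hXc, facetTileVol]
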